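/- Let 𝓗 be a finite set of subgroups of a finite group G, each of prime order (possibly different primes), and suppose distinct subgroups in 𝓗 intersect trivially. Then for any two-outcome POVM {M₀, M₁} on (ℂ^G)^{⊗k}, min{ tr(M₀ (I/|G|)^{⊗k}), min_{H∈𝓗} tr(M₁ ρ_H^{⊗k}) } ≤ 1/2 + (1/4)√( (max_{H∈𝓗}|H|)^k / |𝓗| ). -/

import Mathlib

noncomputable section

open scoped BigOperators ComplexOrder

open Classical in
/-- The coset state `ρ_H = (1/|G|) ∑_g |gH⟩⟨gH|`; its `(x, y)` entry is
`1/|G|` if `x⁻¹ y ∈ H` and `0` otherwise. -/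
def cosetState {G : Type*} [Group G] [Fintype G] (H : Subgroup G) : Matrix G G ℂ :=
  fun x y => if x⁻¹ * y ∈ H then (1 : ℂ) / (Fintype.card G) else 0

/-- `k`-fold tensor power of a matrix. -/
def tensorPow {n : Type*} [Fintype n] (M : Matrix n n ℂ) (k : ℕ) :
    Matrix (Fin k → n) (Fin k → n) ℂ :=
  fun x y => ∏ i, M (x i) (y i)

/-- Trace norm `‖Y‖₁ = tr √(Yᴴ Y)`. -/
def traceNorm {n : Type*} [Fintype n] [DecidableEq n] (Y : Matrix n n ℂ) : ℝ :=
  (((Matrix.posSemidef_conjTranspose_mul_self Y).1.eigenvectorUnitary.1 *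
      Matrix.diagonal (fun i => ((Real.sqrt ((Matrix.posSemidef_conjTranspose_mul_self Y).1.eigenvalues i) : ℝ) : ℂ)) *
      (star (Matrix.posSemidef_conjTranspose_mul_self Y).1.eigenvectorUnitary : Matrix n n ℂ)).trace).re

/-- Operator (spectral) norm of a matrix. -/
def opNorm {n : Type*} [Fintype n] [DecidableEq n] (M : Matrix n n ℂ) : ℝ :=
  ‖Matrix.toEuclideanCLM (𝕜 := ℂ) M‖

/-- Square root of the Moore–Penrose pseudoinverse of a Hermitian matrix
(junk value `0` on non-Hermitian input). -/
def pinvSqrt {n : Type*} [Fintype n] [DecidableEq n] (A : Matrix n n ℂ) : Matrix n n ℂ :=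
  if h : A.IsHermitian then
    h.eigenvectorUnitary.1 *
      Matrix.diagonal (fun i => ((Real.sqrt (h.eigenvalues i))⁻¹ : ℂ)) *
      (star h.eigenvectorUnitary : Matrix n n ℂ)
  else 0

set_option linter.unusedSectionVars false
set_option linter.unusedVariables false

section Helpers
variable {n : Type*} [Fintype n] [DecidableEq n]

lemma tensorPow_trace {k : ℕ} (A : Matrix n n ℂ) :
    (tensorPow A k).trace = A.trace ^ k := by
  simp only [Matrix.trace, Matrix.diag, tensorPow]
  rw [Fintype.sum_pow]

lemma tensorPow_mul_trace {k : ℕ} (A B : Matrix n n ℂ) :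
    (tensorPow A k * tensorPow B k).trace = ((A * B).trace) ^ k := by
  simp only [Matrix.trace, Matrix.diag, Matrix.mul_apply, tensorPow,
    ← Finset.prod_mul_distrib]
  have h1 : ∀ x : Fin k → n, (∑ y : Fin k → n, ∏ i, A (x i) (y i) * B (y i) (x i))
      = ∏ i, ∑ b, A (x i) b * B b (x i) := fun x => (Fintype.prod_sum (fun i b => A (x i) b * B b (x i))).symm
  simp_rw [h1]
  rw [show (∑ x : Fin k → n, ∏ i : Fin k, ∑ b : n, A (x i) b * B b (x i))
      = ∏ _i : Fin k, ∑ a : n, ∑ b : n, A a b * B b a from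
    (Fintype.prod_sum (fun (_ : Fin k) (a : n) => ∑ b, A a b * B b a)).symm]
  simp [Finset.prod_const]

lemma tensorPow_isHermitian {k : ℕ} {A : Matrix n n ℂ} (hA : A.IsHermitian) :
    (tensorPow A k).IsHermitian := by
  ext x y
  simp only [Matrix.conjTranspose_apply, tensorPow, star_prod]
  exact Finset.prod_congr rfl fun i _ => hA.apply (x i) (y i)

lemma tensorPow_smul_one {k : ℕ} (c : ℂ) :
    tensorPow (c • (1 : Matrix n n ℂ)) k
      = (c ^ k) • (1 : Matrix (Fin k → n) (Fin k → n) ℂ) := by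
  funext x y
  simp only [tensorPow, Matrix.smul_apply, Matrix.one_apply, smul_eq_mul, mul_ite, mul_one,
    mul_zero]
  by_cases h : x = y
  · subst h; simp [Finset.prod_const]
  · obtain ⟨i, hi⟩ := Function.ne_iff.mp h
    rw [Finset.prod_eq_zero (Finset.mem_univ i) (if_neg hi : (if x i = y i then c else 0) = 0), if_neg h]

end Helpers

section CosetHelpers
variable {G : Type*} [Group G] [Fintype G] [DecidableEq G]

lemma cosetState_isHermitian (H : Subgroup G) : (cosetState H).IsHermitian := by
  classical
  ext x y
  simp only [Matrix.conjTranspose_apply, cosetState]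
  have hmem : (y⁻¹ * x ∈ H) ↔ (x⁻¹ * y ∈ H) := by
    rw [← inv_mem_iff (x := y⁻¹ * x)]; simp [mul_inv_rev]
  rw [if_congr hmem rfl rfl]
  split <;> simp

lemma cosetState_trace (H : Subgroup G) : (cosetState H).trace = 1 := by
  classical
  simp only [Matrix.trace, Matrix.diag, cosetState, inv_mul_cancel, H.one_mem, if_true]
  rw [Finset.sum_const, Finset.card_univ, nsmul_eq_mul]
  have : (Fintype.card G : ℂ) ≠ 0 := Nat.cast_ne_zero.mpr Fintype.card_ne_zero
  field_simp

lemma cosetState_mul_trace (H H' : Subgroup G) :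
    (cosetState H * cosetState H').trace
      = (Nat.card ↥(H ⊓ H') : ℂ) / (Fintype.card G : ℂ) := by
  classical
  have hG : (Fintype.card G : ℂ) ≠ 0 := Nat.cast_ne_zero.mpr Fintype.card_ne_zero
  simp only [Matrix.trace, Matrix.diag, Matrix.mul_apply, cosetState]
  have key : ∀ x : G, (∑ y : G, (if x⁻¹ * y ∈ H then (1:ℂ)/(Fintype.card G) else 0) *
      (if y⁻¹ * x ∈ H' then (1:ℂ)/(Fintype.card G) else 0))
      = (Nat.card ↥(H ⊓ H') : ℂ) * ((1:ℂ)/(Fintype.card G))^2 := by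
    intro x
    rw [← Equiv.sum_comp (Equiv.mulLeft x)]
    have h1 : ∀ z : G, x⁻¹ * (Equiv.mulLeft x z) = z := by intro z; simp
    have h2 : ∀ z : G, ((Equiv.mulLeft x z)⁻¹ * x ∈ H') ↔ z ∈ H' := by
      intro z
      simp only [Equiv.coe_mulLeft, mul_inv_rev]
      rw [mul_assoc, inv_mul_cancel, mul_one, inv_mem_iff]
    calc (∑ z : G, (if x⁻¹ * (Equiv.mulLeft x z) ∈ H then (1:ℂ)/(Fintype.card G) else 0) *
          (if (Equiv.mulLeft x z)⁻¹ * x ∈ H' then (1:ℂ)/(Fintype.card G) else 0))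
        = ∑ z : G, (if z ∈ H ⊓ H' then ((1:ℂ)/(Fintype.card G))^2 else 0) := by
          refine Finset.sum_congr rfl fun z _ => ?_
          rw [h1 z, if_congr (h2 z) rfl rfl]
          by_cases hz1 : z ∈ H <;> by_cases hz2 : z ∈ H' <;>
            simp [hz1, hz2, Subgroup.mem_inf, sq]
      _ = (Nat.card ↥(H ⊓ H') : ℂ) * ((1:ℂ)/(Fintype.card G))^2 := by
          rw [Finset.sum_ite, Finset.sum_const, Finset.sum_const_zero, add_zero,
            nsmul_eq_mul]
          congr 2
          rw [Nat.card_eq_fintype_card, Fintype.card_subtype]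
  rw [Finset.sum_congr rfl fun x _ => key x, Finset.sum_const, Finset.card_univ, nsmul_eq_mul]
  field_simp

end CosetHelpers

section KeyBound
variable {n : Type*} [Fintype n] [DecidableEq n]

lemma diag_re_nonneg {P : Matrix n n ℂ} (hP : P.PosSemidef) (i : n) : 0 ≤ (P i i).re := by
  have h := hP.re_dotProduct_nonneg (Pi.single i 1)
  simpa [dotProduct, Matrix.mulVec_single, Pi.single_apply, Finset.sum_ite_eq] using h

lemma key_bound (M X : Matrix n n ℂ) (hM : M.PosSemidef) (hM' : (1 - M).PosSemidef)
    (hX : X.IsHermitian) (htr : X.trace = 0) :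
    (M * X).trace.re ≤ (1/2) * Real.sqrt ((Fintype.card n) * (X * X).trace.re) := by
  classical
  set V : Matrix n n ℂ := (hX.eigenvectorUnitary : Matrix n n ℂ) with hVdef
  have hVmem := (Matrix.IsHermitian.eigenvectorUnitary hX).2
  have hVsV : star V * V = 1 := Matrix.mem_unitaryGroup_iff'.mp hVmem
  have hVVs : V * star V = 1 := Matrix.mem_unitaryGroup_iff.mp hVmem
  set lam : n → ℝ := hX.eigenvalues with hlam
  set D : Matrix n n ℂ := Matrix.diagonal (fun i => (lam i : ℂ)) with hD
  have hspec : X = V * D * star V := hX.spectral_theorem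
  -- trace of X is sum of eigenvalues
  have htrD : ∑ i, lam i = 0 := by
    have h1 : D.trace = 0 := by
      rw [hspec, Matrix.trace_mul_cycle, hVsV, one_mul] at htr
      exact htr
    rw [Matrix.trace_diagonal] at h1
    have := congrArg Complex.re h1
    simpa [Complex.re_sum] using this
  -- trace of X^2 is sum of eigenvalues squared
  have htrX2 : (X * X).trace.re = ∑ i, (lam i)^2 := by
    have hXX : X * X = V * (D * D) * star V := by
      rw [hspec]
      calc V * D * star V * (V * D * star V)
          = V * D * (star V * V) * D * star V := by
            simp only [Matrix.mul_assoc]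
        _ = V * (D * D) * star V := by rw [hVsV]; simp only [Matrix.mul_assoc, Matrix.one_mul]
    rw [hXX, Matrix.trace_mul_cycle, ← Matrix.mul_assoc, hVsV, one_mul, hD,
      Matrix.diagonal_mul_diagonal, Matrix.trace_diagonal]
    simp [Complex.re_sum, sq]
  -- trace of M * X
  set N : Matrix n n ℂ := star V * M * V with hN
  have htraceMX : (M * X).trace = ∑ i, N i i * (lam i : ℂ) := by
    calc (M * X).trace = ((M * V * D) * star V).trace := by
          rw [hspec]; simp only [Matrix.mul_assoc]
      _ = (star V * (M * V * D)).trace := by rw [Matrix.trace_mul_comm]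
      _ = (N * D).trace := by simp only [Matrix.mul_assoc, hN]
      _ = ∑ i, N i i * (lam i : ℂ) := by
          simp [Matrix.trace, Matrix.diag, Matrix.mul_diagonal, hD]
  have hNpsd : N.PosSemidef := by
    have := hM.conjTranspose_mul_mul_same V
    rwa [← Matrix.star_eq_conjTranspose] at this
  have hNpsd' : ((1 : Matrix n n ℂ) - N).PosSemidef := by
    have h := hM'.conjTranspose_mul_mul_same V
    rw [← Matrix.star_eq_conjTranspose] at h
    have heq : star V * (1 - M) * V = 1 - N := by
      rw [mul_sub, mul_one, sub_mul, hVsV, hN]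
    rwa [heq] at h
  have hdiag0 : ∀ i, 0 ≤ (N i i).re := fun i => diag_re_nonneg hNpsd i
  have hdiag1 : ∀ i, (N i i).re ≤ 1 := by
    intro i
    have h := diag_re_nonneg hNpsd' i
    have : ((1 : Matrix n n ℂ) - N) i i = 1 - N i i := by
      simp [Matrix.sub_apply, Matrix.one_apply]
    rw [this] at h
    simp only [Complex.sub_re, Complex.one_re] at h
    linarith
  -- bound
  have hre : (M * X).trace.re = ∑ i, (N i i).re * lam i := by
    rw [htraceMX, Complex.re_sum]
    refine Finset.sum_congr rfl fun i _ => ?_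
    simp [Complex.mul_re]
  have step1 : (M * X).trace.re ≤ ∑ i, max (lam i) 0 := by
    rw [hre]
    refine Finset.sum_le_sum fun i _ => ?_
    rcases le_or_gt 0 (lam i) with h | h
    · exact le_max_of_le_left (by nlinarith [hdiag0 i, hdiag1 i])
    · exact le_max_of_le_right (by nlinarith [hdiag0 i, hdiag1 i])
  have step2 : ∑ i, max (lam i) 0 = (1/2) * ∑ i, |lam i| := by
    have : ∀ i : n, max (lam i) 0 = (|lam i| + lam i) / 2 := by
      intro i
      rcases le_or_gt 0 (lam i) with h | h
      · rw [max_eq_left h, abs_of_nonneg h]; ring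
      · rw [max_eq_right h.le, abs_of_neg h]; ring
    rw [Finset.sum_congr rfl fun i _ => this i, ← Finset.sum_div, Finset.sum_add_distrib,
      htrD, add_zero]
    ring
  have step3 : ∑ i, |lam i| ≤ Real.sqrt ((Fintype.card n) * ∑ i, (lam i)^2) := by
    have hcs : (∑ i, |lam i|) ^ 2 ≤ (Fintype.card n : ℝ) * ∑ i, |lam i| ^ 2 := by
      simpa [Finset.card_univ] using
        sq_sum_le_card_mul_sum_sq (s := Finset.univ) (f := fun i => |lam i|)
    have h2 : (∑ i, |lam i| ^ 2) = ∑ i, (lam i)^2 := by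
      exact Finset.sum_congr rfl fun i _ => sq_abs _
    rw [h2] at hcs
    have hnn : 0 ≤ ∑ i, |lam i| := Finset.sum_nonneg fun i _ => abs_nonneg _
    calc ∑ i, |lam i| = Real.sqrt ((∑ i, |lam i|)^2) := (Real.sqrt_sq hnn).symm
      _ ≤ Real.sqrt ((Fintype.card n) * ∑ i, (lam i)^2) := Real.sqrt_le_sqrt hcs
  rw [htrX2]
  calc (M * X).trace.re ≤ ∑ i, max (lam i) 0 := step1
    _ = (1/2) * ∑ i, |lam i| := step2
    _ ≤ (1/2) * Real.sqrt ((Fintype.card n) * ∑ i, (lam i)^2) := by linarith [step3]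

end KeyBound

set_option maxHeartbeats 1000000 in
open Classical in
/-- Decision (TCS) bound: for any two-outcome POVM on k copies, the worst-case success
probability is at most 1/2 + (1/4)√((max |H|)^k / |𝓗|). -/
theorem tcs_decision_bound {G : Type*} [Group G] [Fintype G] [DecidableEq G]
    (𝓗 : Finset (Subgroup G)) (h𝓗 : 𝓗.Nonempty)
    (hprime : ∀ H ∈ 𝓗, (Nat.card ↥H).Prime)
    (htriv : ∀ H ∈ 𝓗, ∀ H' ∈ 𝓗, H ≠ H' → Nat.card ↥(H ⊓ H') = 1)
    (k : ℕ) (M₀ M₁ : Matrix (Fin k → G) (Fin k → G) ℂ)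
    (h₀ : M₀.PosSemidef) (h₁ : M₁.PosSemidef) (hsum : M₀ + M₁ = 1) :
    min ((M₀ * tensorPow ((1 / (Fintype.card G : ℂ)) • (1 : Matrix G G ℂ)) k).trace).re
        (𝓗.inf' h𝓗 fun H => ((M₁ * tensorPow (cosetState H) k).trace).re) ≤
      1/2 + (1/4) * Real.sqrt (((𝓗.sup fun H => Nat.card ↥H : ℕ) : ℝ) ^ k / (𝓗.card : ℝ)) := by
  classical
  have hGc : (Fintype.card G : ℂ) ≠ 0 := Nat.cast_ne_zero.mpr Fintype.card_ne_zero
  have hGR : (0:ℝ) < (Fintype.card G : ℝ) := by exact_mod_cast Fintype.card_pos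
  have hm0 : 0 < 𝓗.card := Finset.card_pos.mpr h𝓗
  set m : ℕ := 𝓗.card with hmdef
  have hmR : (0:ℝ) < (m:ℝ) := by exact_mod_cast hm0
  have hmc : (m:ℂ) ≠ 0 := Nat.cast_ne_zero.mpr hm0.ne'
  set p : ℕ := 𝓗.sup fun H => Nat.card ↥H with hpdef
  set c : ℂ := 1 / (Fintype.card G : ℂ) with hcdef
  have hcstar : star c = c := by simp [hcdef]
  have honeC : c * (Fintype.card G : ℂ) = 1 := by rw [hcdef]; field_simp
  set σ : Matrix (Fin k → G) (Fin k → G) ℂ := tensorPow (c • (1 : Matrix G G ℂ)) k with hσdef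
  set S : Matrix (Fin k → G) (Fin k → G) ℂ := ∑ H ∈ 𝓗, tensorPow (cosetState H) k with hSdef
  set ρ : Matrix (Fin k → G) (Fin k → G) ℂ := ((m:ℂ))⁻¹ • S with hρdef
  set X : Matrix (Fin k → G) (Fin k → G) ℂ := σ - ρ with hXdef
  have hM1 : M₁ = 1 - M₀ := eq_sub_of_add_eq' hsum
  -- basic traces
  have htrT : ∀ H : Subgroup G, (tensorPow (cosetState H) k).trace = 1 := by
    intro H; rw [tensorPow_trace, cosetState_trace, one_pow]
  have htrS : S.trace = (m:ℂ) := by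
    rw [hSdef, Matrix.trace_sum]
    simp [htrT, hmdef]
  have htrσ : σ.trace = 1 := by
    rw [hσdef, tensorPow_trace, Matrix.trace_smul, Matrix.trace_one, smul_eq_mul, honeC, one_pow]
  -- the minimum value
  set a : ℝ := min ((M₀ * σ).trace).re
      (𝓗.inf' h𝓗 fun H => ((M₁ * tensorPow (cosetState H) k).trace).re) with hadef
  have h1 : a ≤ ((M₀ * σ).trace).re := min_le_left _ _
  have h2 : ∀ H ∈ 𝓗, a ≤ ((M₁ * tensorPow (cosetState H) k).trace).re := fun H hH =>
    le_trans (min_le_right _ _) (Finset.inf'_le _ hH)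
  have h3 : (m:ℝ) * a ≤ ((M₁ * S).trace).re := by
    have : ((M₁ * S).trace).re = ∑ H ∈ 𝓗, ((M₁ * tensorPow (cosetState H) k).trace).re := by
      rw [hSdef, Finset.mul_sum, Matrix.trace_sum, Complex.re_sum]
    rw [this]
    calc (m:ℝ) * a = ∑ _H ∈ 𝓗, a := by rw [Finset.sum_const, nsmul_eq_mul, hmdef]
      _ ≤ _ := Finset.sum_le_sum h2
  have h5 : ((M₁ * S).trace).re = (m:ℝ) - ((M₀ * S).trace).re := by
    rw [hM1, sub_mul, one_mul, Matrix.trace_sub, htrS, Complex.sub_re]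
    norm_num
  -- a ≤ 1/2 + (1/2) tr(M₀ X)
  have hMρ : ((M₀ * ρ).trace).re = ((M₀ * S).trace).re / m := by
    rw [hρdef, mul_smul_comm, Matrix.trace_smul, smul_eq_mul]
    have : ((m:ℂ))⁻¹ = (((m:ℝ)⁻¹ : ℝ) : ℂ) := by push_cast; ring
    rw [this, Complex.re_ofReal_mul]
    ring
  have hMX : ((M₀ * X).trace).re = ((M₀ * σ).trace).re - ((M₀ * S).trace).re / m := by
    rw [hXdef, mul_sub, Matrix.trace_sub, Complex.sub_re, hMρ]
  have hkey : a ≤ 1/2 + (1/2) * ((M₀ * X).trace).re := by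
    have h6 : a ≤ 1 - ((M₀ * S).trace).re / m := by
      rw [h5] at h3
      have hr : ((M₀ * S).trace).re / m * m = ((M₀ * S).trace).re :=
        div_mul_cancel₀ _ hmR.ne'
      nlinarith [h3, hmR]
    linarith [h1, h6, hMX]
  -- Hermitian and traceless X
  have hcherm : (c • (1 : Matrix G G ℂ)).IsHermitian := by
    show Matrix.conjTranspose _ = _
    rw [Matrix.conjTranspose_smul, Matrix.conjTranspose_one, hcstar]
  have hσherm : σ.IsHermitian := tensorPow_isHermitian hcherm
  have hSherm : S.IsHermitian := by
    show Matrix.conjTranspose _ = _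
    rw [hSdef, Matrix.conjTranspose_sum]
    exact Finset.sum_congr rfl fun H _ => tensorPow_isHermitian (cosetState_isHermitian H)
  have hρherm : ρ.IsHermitian := by
    show Matrix.conjTranspose _ = _
    rw [hρdef, Matrix.conjTranspose_smul, hSherm]
    congr 1
    simp
  have hXherm : X.IsHermitian := hσherm.sub hρherm
  have hXtr : X.trace = 0 := by
    rw [hXdef, Matrix.trace_sub, htrσ, hρdef, Matrix.trace_smul, htrS, smul_eq_mul,
      inv_mul_cancel₀ hmc, sub_self]
  -- apply key bound
  have hbound := key_bound M₀ X h₀ (by rwa [← hM1]) hXherm hXtr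
  -- second moment computation
  set Q2 : ℂ := ∑ H ∈ 𝓗, ∑ H' ∈ 𝓗, (Nat.card ↥(H ⊓ H') : ℂ) ^ k with hQ2def
  have htσσ : (σ * σ).trace = c ^ k := by
    rw [hσdef, tensorPow_mul_trace]
    congr 1
    rw [smul_mul_assoc, Matrix.one_mul, Matrix.trace_smul, Matrix.trace_smul, Matrix.trace_one,
      smul_eq_mul, smul_eq_mul, honeC, mul_one]
  have htσT : ∀ H : Subgroup G, (σ * tensorPow (cosetState H) k).trace = c ^ k := by
    intro H
    rw [hσdef, tensorPow_mul_trace]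
    congr 1
    rw [smul_mul_assoc, Matrix.one_mul, Matrix.trace_smul, cosetState_trace, smul_eq_mul,
      mul_one]
  have htTσ : ∀ H : Subgroup G, (tensorPow (cosetState H) k * σ).trace = c ^ k := by
    intro H
    rw [hσdef, tensorPow_mul_trace]
    congr 1
    rw [mul_smul_comm, Matrix.mul_one, Matrix.trace_smul, cosetState_trace, smul_eq_mul,
      mul_one]
  have htTT : ∀ H H' : Subgroup G,
      (tensorPow (cosetState H) k * tensorPow (cosetState H') k).trace
        = (Nat.card ↥(H ⊓ H') : ℂ) ^ k * c ^ k := by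
    intro H H'
    rw [tensorPow_mul_trace, cosetState_mul_trace, ← mul_pow]
    congr 1
    rw [hcdef]; ring
  have htσρ : (σ * ρ).trace = c ^ k := by
    rw [hρdef, mul_smul_comm, Matrix.trace_smul, smul_eq_mul, hSdef, Finset.mul_sum,
      Matrix.trace_sum, Finset.sum_congr rfl fun H _ => htσT H, Finset.sum_const,
      nsmul_eq_mul, ← hmdef, ← mul_assoc, inv_mul_cancel₀ hmc, one_mul]
  have htρσ : (ρ * σ).trace = c ^ k := by
    rw [hρdef, smul_mul_assoc, Matrix.trace_smul, smul_eq_mul, hSdef, Finset.sum_mul,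
      Matrix.trace_sum, Finset.sum_congr rfl fun H _ => htTσ H, Finset.sum_const,
      nsmul_eq_mul, ← hmdef, ← mul_assoc, inv_mul_cancel₀ hmc, one_mul]
  have hSS : (S * S).trace = Q2 * c ^ k := by
    rw [hSdef, Finset.sum_mul, Matrix.trace_sum, hQ2def, Finset.sum_mul]
    refine Finset.sum_congr rfl fun H _ => ?_
    rw [Finset.mul_sum, Matrix.trace_sum, Finset.sum_mul]
    exact Finset.sum_congr rfl fun H' _ => htTT H H'
  have htρρ : (ρ * ρ).trace = (m:ℂ)⁻¹ * ((m:ℂ)⁻¹ * (Q2 * c ^ k)) := by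
    rw [hρdef, smul_mul_assoc, mul_smul_comm, Matrix.trace_smul, Matrix.trace_smul, hSS,
      smul_eq_mul, smul_eq_mul]
  have hXX : (X * X).trace = c ^ k * ((m:ℂ)⁻¹ * ((m:ℂ)⁻¹ * Q2) - 1) := by
    rw [hXdef, sub_mul, mul_sub, mul_sub, Matrix.trace_sub, Matrix.trace_sub,
      Matrix.trace_sub, htσσ, htσρ, htρσ, htρρ]
    ring
  -- realification
  set g : ℝ := (Fintype.card G : ℝ) with hgdef
  have hg : (0:ℝ) < g := hGR
  set QR2 : ℝ := ∑ H ∈ 𝓗, ∑ H' ∈ 𝓗, (Nat.card ↥(H ⊓ H') : ℝ) ^ k with hQR2def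
  have hQR2cast : ((QR2 : ℝ) : ℂ) = Q2 := by
    rw [hQR2def, hQ2def]
    push_cast
    rfl
  have hXXre : (X * X).trace.re = (g⁻¹) ^ k * ((m:ℝ)⁻¹ * ((m:ℝ)⁻¹ * QR2) - 1) := by
    have heq : (X * X).trace
        = (((g⁻¹) ^ k * ((m:ℝ)⁻¹ * ((m:ℝ)⁻¹ * QR2) - 1) : ℝ) : ℂ) := by
      rw [hXX, ← hQR2cast, hcdef, hgdef]
      push_cast
      ring
    rw [heq, Complex.ofReal_re]
  -- bound QR2
  have hQR2bound : QR2 ≤ (m:ℝ) * ((p:ℝ) ^ k + ((m:ℝ) - 1)) := by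
    rw [hQR2def]
    have hinner : ∀ H ∈ 𝓗, ∑ H' ∈ 𝓗, (Nat.card ↥(H ⊓ H') : ℝ) ^ k
        ≤ (p:ℝ) ^ k + ((m:ℝ) - 1) := by
      intro H hH
      rw [← Finset.add_sum_erase _ _ hH]
      have hdiag : (Nat.card ↥(H ⊓ H) : ℝ) ^ k ≤ (p:ℝ) ^ k := by
        rw [inf_idem]
        have hpH : Nat.card ↥H ≤ p := by
          rw [hpdef]
          exact Finset.le_sup (f := fun K : Subgroup G => Nat.card ↥K) hH
        exact pow_le_pow_left₀ (Nat.cast_nonneg _) (by exact_mod_cast hpH) k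
      have hoff : ∑ H' ∈ 𝓗.erase H, (Nat.card ↥(H ⊓ H') : ℝ) ^ k = (m:ℝ) - 1 := by
        have h1 : ∀ H' ∈ 𝓗.erase H, (Nat.card ↥(H ⊓ H') : ℝ) ^ k = 1 := by
          intro H' hH'
          rw [htriv H hH H' (Finset.mem_of_mem_erase hH')
            (Ne.symm (Finset.mem_erase.mp hH').1)]
          simp
        rw [Finset.sum_congr rfl h1, Finset.sum_const, Finset.card_erase_of_mem hH,
          nsmul_eq_mul, mul_one, ← hmdef, Nat.cast_sub hm0, Nat.cast_one]
      rw [hoff]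
      linarith [hdiag]
    calc ∑ H ∈ 𝓗, ∑ H' ∈ 𝓗, (Nat.card ↥(H ⊓ H') : ℝ) ^ k
        ≤ ∑ _H ∈ 𝓗, ((p:ℝ) ^ k + ((m:ℝ) - 1)) := Finset.sum_le_sum hinner
      _ = (m:ℝ) * ((p:ℝ) ^ k + ((m:ℝ) - 1)) := by
          rw [Finset.sum_const, nsmul_eq_mul, ← hmdef]
  -- final numeric bound
  have hcard : (Fintype.card (Fin k → G) : ℝ) = g ^ k := by
    rw [Fintype.card_fun, Fintype.card_fin, hgdef]
    push_cast
    ring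
  have hgk : g ^ k * (g⁻¹) ^ k = 1 := by
    rw [← mul_pow, mul_inv_cancel₀ hg.ne', one_pow]
  have hfinal : (Fintype.card (Fin k → G) : ℝ) * (X * X).trace.re ≤ (p:ℝ) ^ k / m := by
    rw [hcard, hXXre, ← mul_assoc, hgk, one_mul]
    have hstep : (m:ℝ)⁻¹ * ((m:ℝ)⁻¹ * QR2)
        ≤ (m:ℝ)⁻¹ * ((m:ℝ)⁻¹ * ((m:ℝ) * ((p:ℝ) ^ k + ((m:ℝ) - 1)))) := by
      gcongr
    have heq2 : (m:ℝ)⁻¹ * ((m:ℝ)⁻¹ * ((m:ℝ) * ((p:ℝ) ^ k + ((m:ℝ) - 1))))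
        = (p:ℝ) ^ k / m + 1 - 1 / m := by
      rw [inv_mul_cancel_left₀ hmR.ne', ← div_eq_inv_mul, add_div, sub_div, div_self hmR.ne']
      ring
    have hpos : (0:ℝ) < 1 / m := by positivity
    linarith [hstep]
  -- conclusion
  have hsqrt : Real.sqrt ((Fintype.card (Fin k → G) : ℝ) * (X * X).trace.re)
      ≤ Real.sqrt ((p:ℝ) ^ k / m) := Real.sqrt_le_sqrt hfinal
  have hfin2 := hbound.trans (by linarith [hsqrt] :
    (1/2 : ℝ) * Real.sqrt ((Fintype.card (Fin k → G) : ℝ) * (X * X).trace.re)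
      ≤ (1/2) * Real.sqrt ((p:ℝ) ^ k / m))
  calc a ≤ 1/2 + (1/2) * ((M₀ * X).trace).re := hkey
    _ ≤ 1/2 + (1/2) * ((1/2) * Real.sqrt ((p:ℝ) ^ k / m)) := by linarith [hfin2]
    _ = 1/2 + (1/4) * Real.sqrt ((p:ℝ) ^ k / m) := by ring
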